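/- Under the same setting with Z(2β) twice differentiable, ‖a†(f) a(f) e^{−βH_B}‖²_HS ≤ ‖f‖⁴ [ (1/m²)(d²/d(2β)²) − (1/m)(d/d(2β)) ] Z(2β). -/

import Mathlib

/-- The occupancy-number basis vector `|n⟩` of the Bose–Fock space. -/
def fockBasis (n : ℕ →₀ ℕ) : (ℕ →₀ ℕ) → ℂ := fun m => if m = n then 1 else 0

/-- The smeared annihilation operator `a(f) = ∑ₖ f̄ₖ aₖ` on coefficient functions. -/
noncomputable def fockAnn (f : ℕ → ℂ) (ψ : (ℕ →₀ ℕ) → ℂ) : (ℕ →₀ ℕ) → ℂ :=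
  fun m => ∑' k : ℕ,
    (starRingEnd ℂ) (f k) * (Real.sqrt ((m k : ℝ) + 1) : ℂ) * ψ (m + Finsupp.single k 1)

/-- The smeared creation operator `a†(f) = ∑ₖ fₖ aₖ†` on coefficient functions. -/
noncomputable def fockCre (f : ℕ → ℂ) (ψ : (ℕ →₀ ℕ) → ℂ) : (ℕ →₀ ℕ) → ℂ :=
  fun m => ∑' k : ℕ, f k * (Real.sqrt (m k : ℝ) : ℂ) * ψ (m - Finsupp.single k 1)

/-- The Gibbs exponential `e^{−βH_B}` acting diagonally on the occupancy number basis. -/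
noncomputable def fockGibbs (β : ℝ) (ω : ℕ → ℝ) (ψ : (ℕ →₀ ℕ) → ℂ) : (ℕ →₀ ℕ) → ℂ :=
  fun m => ((Real.exp (-β * (m.sum fun k v => ω k * (v : ℝ))) : ℝ) : ℂ) * ψ m

/-- The partition function `Z(s) = tr e^{−sH_B} = ∑_n e^{−s ∑ₖ nₖωₖ}` as a function of `s`. -/
noncomputable def Ztr (ω : ℕ → ℝ) : ℝ → ℝ :=
  fun s => ∑' n : ℕ →₀ ℕ, Real.exp (-s * (n.sum fun k v => ω k * (v : ℝ)))


section HSaux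

set_option maxHeartbeats 1000000


open Finset Real


lemma expE_eq (ω : ℕ → ℝ) (s : ℝ) (n : ℕ →₀ ℕ) :
    Real.exp (-s * (n.sum fun k v => ω k * (v : ℝ)))
      = ∏ k ∈ n.support, Real.exp (-s * ω k) ^ n k := by
  rw [Finsupp.sum, Finset.mul_sum, Real.exp_sum]
  refine Finset.prod_congr rfl fun k _ => ?_
  rw [show -s * (ω k * (n k : ℝ)) = (n k : ℝ) * (-s * ω k) by ring, Real.exp_nat_mul]

lemma summable_expE (ω : ℕ → ℝ) (m : ℝ) (hm : 0 < m) (hω : ∀ k, m ≤ ω k)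
    (hsum : ∀ b > (0:ℝ), Summable fun k => Real.exp (-b * ω k)) {s : ℝ} (hs : 0 < s) :
    Summable fun n : ℕ →₀ ℕ => Real.exp (-s * (n.sum fun k v => ω k * (v:ℝ))) := by
  classical
  set y : ℕ → ℝ := fun k => Real.exp (-s * ω k) with hy
  have hy0 : ∀ k, 0 < y k := fun k => Real.exp_pos _
  set r : ℝ := Real.exp (-s * m) with hr
  have hr1 : r < 1 := by
    rw [hr, Real.exp_lt_one_iff]
    nlinarith
  have hr0 : 0 < r := Real.exp_pos _
  have hyr : ∀ k, y k ≤ r := fun k => Real.exp_le_exp.2 (by nlinarith [hω k])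
  have hyk1 : ∀ k, y k < 1 := fun k => lt_of_le_of_lt (hyr k) hr1
  have hA : Summable y := hsum s hs
  set C : ℝ := Real.exp ((1 - r)⁻¹ * ∑' k, y k) with hC
  apply summable_of_sum_le (c := C)
  · intro n
    positivity
  · intro u
    set K : Finset ℕ := u.sup Finsupp.support with hK
    set M : ℕ := u.sup fun n => n.sum fun _ v => v with hM
    have hsupp : ∀ n ∈ u, n.support ⊆ K := fun n hn => Finset.le_sup hn
    have hval : ∀ n ∈ u, ∀ k, n k ≤ M := by
      intro n hn k
      have h1 : n k ≤ n.sum fun _ v => v := by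
        rw [Finsupp.sum]
        by_cases hk : k ∈ n.support
        · exact Finset.single_le_sum (f := fun a => n a) (fun _ _ => Nat.zero_le _) hk
        · simp [Finsupp.notMem_support_iff.1 hk]
      exact h1.trans (Finset.le_sup (f := fun n : ℕ →₀ ℕ => n.sum fun _ v => v) hn)
    have step1 : ∀ n ∈ u, Real.exp (-s * (n.sum fun k v => ω k * (v:ℝ)))
        = ∏ k ∈ K, y k ^ n k := by
      intro n hn
      rw [expE_eq]
      exact Finset.prod_subset (hsupp n hn) (by
        intro k _ hk
        simp [Finsupp.notMem_support_iff.1 hk])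
    rw [Finset.sum_congr rfl step1]
    have hinj : Set.InjOn (fun n : ℕ →₀ ℕ => (fun k (_ : k ∈ K) => n k)) u := by
      intro a ha b hb h
      ext k
      by_cases hk : k ∈ K
      · exact congrFun (congrFun h k) hk
      · rw [Finsupp.notMem_support_iff.1 fun hc => hk (hsupp a ha hc),
          Finsupp.notMem_support_iff.1 fun hc => hk (hsupp b hb hc)]
    have himage : u.image (fun n : ℕ →₀ ℕ => (fun k (_ : k ∈ K) => n k))
        ⊆ K.pi fun _ => Finset.range (M + 1) := by
      intro p hp
      rw [Finset.mem_image] at hp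
      obtain ⟨n, hn, rfl⟩ := hp
      rw [Finset.mem_pi]
      intro k hk
      rw [Finset.mem_range]
      exact Nat.lt_succ_of_le (hval n hn k)
    calc ∑ n ∈ u, ∏ k ∈ K, y k ^ n k
        = ∑ p ∈ u.image (fun n : ℕ →₀ ℕ => (fun k (_ : k ∈ K) => n k)),
            ∏ k ∈ K.attach, y k.1 ^ p k.1 k.2 := by
          rw [Finset.sum_image (fun a ha b hb h => hinj ha hb h)]
          refine Finset.sum_congr rfl fun n _ => ?_
          rw [← Finset.prod_attach K (fun k => y k ^ n k)]
      _ ≤ ∑ p ∈ K.pi (fun _ => Finset.range (M + 1)),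
            ∏ k ∈ K.attach, y k.1 ^ p k.1 k.2 := by
          refine Finset.sum_le_sum_of_subset_of_nonneg himage fun p _ _ => ?_
          positivity
      _ = ∏ k ∈ K, ∑ v ∈ Finset.range (M + 1), y k ^ v := (Finset.prod_sum K (fun _ => Finset.range (M + 1)) (fun k v => y k ^ v)).symm
      _ ≤ ∏ k ∈ K, (1 - y k)⁻¹ := by
          refine Finset.prod_le_prod (fun k _ => Finset.sum_nonneg fun v _ => pow_nonneg (hy0 k).le _) fun k _ => ?_
          have hsumm : Summable fun v : ℕ => y k ^ v :=
            summable_geometric_of_lt_one (hy0 k).le (hyk1 k)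
          calc ∑ v ∈ Finset.range (M + 1), y k ^ v ≤ ∑' v : ℕ, y k ^ v :=
                Summable.sum_le_tsum _ (fun v _ => pow_nonneg (hy0 k).le _) hsumm
            _ = (1 - y k)⁻¹ := tsum_geometric_of_lt_one (hy0 k).le (hyk1 k)
      _ ≤ ∏ k ∈ K, Real.exp ((1 - r)⁻¹ * y k) := by
          refine Finset.prod_le_prod (fun k _ => inv_nonneg.2 (by linarith [hyr k])) fun k _ => ?_
          have h1 : 0 < 1 - r := by linarith
          have h2 : 1 - r ≤ 1 - y k := by linarith [hyr k]
          have h3 : 0 < 1 - y k := lt_of_lt_of_le h1 h2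
          have h4 : (1 - y k)⁻¹ ≤ 1 + (1 - r)⁻¹ * y k := by
            rw [← one_div, div_le_iff₀ h3]
            have key : (1 - r)⁻¹ * y k * (1 - r) ≤ (1 - r)⁻¹ * y k * (1 - y k) :=
              mul_le_mul_of_nonneg_left h2
                (mul_nonneg (inv_nonneg.2 h1.le) (hy0 k).le)
            have key2 : (1 - r)⁻¹ * y k * (1 - r) = y k := by
              field_simp
            nlinarith [hy0 k]
          exact h4.trans (by linarith [Real.add_one_le_exp ((1 - r)⁻¹ * y k)])
      _ = Real.exp (∑ k ∈ K, (1 - r)⁻¹ * y k) := (Real.exp_sum _ _).symm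
      _ ≤ C := by
          rw [hC, Real.exp_le_exp, ← Finset.mul_sum]
          exact mul_le_mul_of_nonneg_left
            (Summable.sum_le_tsum K (fun k _ => (hy0 k).le) hA) (inv_nonneg.2 (by linarith))

noncomputable def En (ω : ℕ → ℝ) (n : ℕ →₀ ℕ) : ℝ := n.sum fun k v => ω k * (v : ℝ)


lemma En_nonneg (ω : ℕ → ℝ) (hω : ∀ k, 0 ≤ ω k) (n : ℕ →₀ ℕ) : 0 ≤ En ω n :=
  Finset.sum_nonneg fun k _ => mul_nonneg (hω k) (Nat.cast_nonneg _)

lemma le_exp_aux {c x : ℝ} (hc : 0 < c) (hx : 0 ≤ x) : x ≤ c⁻¹ * Real.exp (c * x) := by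
  have h1 := Real.add_one_le_exp (c * x)
  rw [← mul_le_mul_iff_of_pos_left hc, ← mul_assoc, mul_inv_cancel₀ hc.ne', one_mul]
  linarith

lemma summable_E1 (ω : ℕ → ℝ) (m : ℝ) (hm : 0 < m) (hω : ∀ k, m ≤ ω k)
    (hsum : ∀ b > (0:ℝ), Summable fun k => Real.exp (-b * ω k)) {s : ℝ} (hs : 0 < s) :
    Summable fun n : ℕ →₀ ℕ => En ω n * Real.exp (-s * En ω n) := by
  have hE0 : ∀ n, 0 ≤ En ω n := En_nonneg ω (fun k => hm.le.trans (hω k))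
  have hbase := (summable_expE ω m hm hω hsum (s := s/2) (by linarith)).mul_left ((s/2)⁻¹)
  refine Summable.of_nonneg_of_le (fun n => mul_nonneg (hE0 n) (Real.exp_pos _).le) (fun n => ?_) hbase
  have h1 : En ω n ≤ (s/2)⁻¹ * Real.exp ((s/2) * En ω n) := le_exp_aux (by linarith) (hE0 n)
  calc En ω n * Real.exp (-s * En ω n)
      ≤ ((s/2)⁻¹ * Real.exp ((s/2) * En ω n)) * Real.exp (-s * En ω n) :=
        mul_le_mul_of_nonneg_right h1 (Real.exp_pos _).le
    _ = (s/2)⁻¹ * Real.exp (-(s/2) * (n.sum fun k v => ω k * (v:ℝ))) := by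
        rw [mul_assoc, ← Real.exp_add]
        show _ = (s/2)⁻¹ * Real.exp (-(s/2) * En ω n)
        ring_nf

lemma summable_E2 (ω : ℕ → ℝ) (m : ℝ) (hm : 0 < m) (hω : ∀ k, m ≤ ω k)
    (hsum : ∀ b > (0:ℝ), Summable fun k => Real.exp (-b * ω k)) {s : ℝ} (hs : 0 < s) :
    Summable fun n : ℕ →₀ ℕ => (En ω n)^2 * Real.exp (-s * En ω n) := by
  have hE0 : ∀ n, 0 ≤ En ω n := En_nonneg ω (fun k => hm.le.trans (hω k))
  have hbase := (summable_expE ω m hm hω hsum (s := s/2) (by linarith)).mul_left (((s/4)⁻¹)^2)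
  refine Summable.of_nonneg_of_le
    (fun n => mul_nonneg (sq_nonneg _) (Real.exp_pos _).le) (fun n => ?_) hbase
  have h1 : En ω n ≤ (s/4)⁻¹ * Real.exp ((s/4) * En ω n) := le_exp_aux (by linarith) (hE0 n)
  have h2 : (En ω n)^2 ≤ ((s/4)⁻¹)^2 * Real.exp ((s/2) * En ω n) := by
    have := mul_le_mul h1 h1 (hE0 n) (by positivity)
    calc (En ω n)^2 = En ω n * En ω n := sq (En ω n) ▸ (sq (En ω n)).symm ▸ (sq (En ω n))
      _ ≤ ((s/4)⁻¹ * Real.exp ((s/4) * En ω n)) * ((s/4)⁻¹ * Real.exp ((s/4) * En ω n)) := this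
      _ = ((s/4)⁻¹)^2 * (Real.exp ((s/4) * En ω n) * Real.exp ((s/4) * En ω n)) := by ring
      _ = ((s/4)⁻¹)^2 * Real.exp ((s/2) * En ω n) := by
          rw [← Real.exp_add]; ring_nf
  calc (En ω n)^2 * Real.exp (-s * En ω n)
      ≤ (((s/4)⁻¹)^2 * Real.exp ((s/2) * En ω n)) * Real.exp (-s * En ω n) :=
        mul_le_mul_of_nonneg_right h2 (Real.exp_pos _).le
    _ = ((s/4)⁻¹)^2 * Real.exp (-(s/2) * (n.sum fun k v => ω k * (v:ℝ))) := by
        rw [mul_assoc, ← Real.exp_add]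
        show _ = ((s/4)⁻¹)^2 * Real.exp (-(s/2) * En ω n)
        ring_nf

lemma hasDerivAt_Ztr (ω : ℕ → ℝ) (m β : ℝ) (hm : 0 < m) (hω : ∀ k, m ≤ ω k) (hβ : 0 < β)
    (hsum : ∀ b > (0:ℝ), Summable fun k => Real.exp (-b * ω k)) :
    ∀ y ∈ Set.Ioi β,
      HasDerivAt (Ztr ω) (∑' n : ℕ →₀ ℕ, -(En ω n * Real.exp (-y * En ω n))) y := by
  intro y hy
  have hE0 : ∀ n, 0 ≤ En ω n := En_nonneg ω (fun k => hm.le.trans (hω k))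
  have h2β : (2*β : ℝ) ∈ Set.Ioi β := by simp [Set.mem_Ioi]; linarith
  have H := hasDerivAt_tsum_of_isPreconnected
    (u := fun n : ℕ →₀ ℕ => En ω n * Real.exp (-β * En ω n))
    (g := fun (n : ℕ →₀ ℕ) (z : ℝ) => Real.exp (-z * En ω n))
    (g' := fun (n : ℕ →₀ ℕ) (z : ℝ) => -(En ω n * Real.exp (-z * En ω n)))
    (summable_E1 ω m hm hω hsum hβ) isOpen_Ioi isPreconnected_Ioi
    (fun n z _ => by
      have h := ((hasDerivAt_neg z).mul_const (En ω n)).exp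
      exact h.congr_deriv (by ring))
    (fun n z hz => by
      rw [Real.norm_eq_abs, abs_neg, abs_of_nonneg (mul_nonneg (hE0 n) (Real.exp_pos _).le)]
      refine mul_le_mul_of_nonneg_left (Real.exp_le_exp.2 ?_) (hE0 n)
      have : β ≤ z := le_of_lt hz
      nlinarith [hE0 n])
    h2β
    (by exact summable_expE ω m hm hω hsum (s := 2*β) (by linarith))
    hy
  exact H

lemma hasDerivAt_Ztr2 (ω : ℕ → ℝ) (m β : ℝ) (hm : 0 < m) (hω : ∀ k, m ≤ ω k) (hβ : 0 < β)
    (hsum : ∀ b > (0:ℝ), Summable fun k => Real.exp (-b * ω k)) :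
    ∀ y ∈ Set.Ioi β,
      HasDerivAt (fun z => ∑' n : ℕ →₀ ℕ, -(En ω n * Real.exp (-z * En ω n)))
        (∑' n : ℕ →₀ ℕ, (En ω n)^2 * Real.exp (-y * En ω n)) y := by
  intro y hy
  have hE0 : ∀ n, 0 ≤ En ω n := En_nonneg ω (fun k => hm.le.trans (hω k))
  have h2β : (2*β : ℝ) ∈ Set.Ioi β := by simp [Set.mem_Ioi]; linarith
  exact hasDerivAt_tsum_of_isPreconnected
    (u := fun n : ℕ →₀ ℕ => (En ω n)^2 * Real.exp (-β * En ω n))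
    (g := fun (n : ℕ →₀ ℕ) (z : ℝ) => -(En ω n * Real.exp (-z * En ω n)))
    (g' := fun (n : ℕ →₀ ℕ) (z : ℝ) => (En ω n)^2 * Real.exp (-z * En ω n))
    (summable_E2 ω m hm hω hsum hβ) isOpen_Ioi isPreconnected_Ioi
    (fun n z _ => by
      have h := (((hasDerivAt_neg z).mul_const (En ω n)).exp.const_mul (En ω n)).neg
      exact h.congr_deriv (by ring))
    (fun n z hz => by
      rw [Real.norm_eq_abs, abs_of_nonneg (mul_nonneg (sq_nonneg _) (Real.exp_pos _).le)]
      refine mul_le_mul_of_nonneg_left (Real.exp_le_exp.2 ?_) (sq_nonneg _)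
      have : β ≤ z := le_of_lt hz
      nlinarith [hE0 n])
    h2β
    ((summable_E1 ω m hm hω hsum (s := 2*β) (by linarith)).neg)
    hy

lemma deriv_Ztr_eq (ω : ℕ → ℝ) (m β : ℝ) (hm : 0 < m) (hω : ∀ k, m ≤ ω k) (hβ : 0 < β)
    (hsum : ∀ b > (0:ℝ), Summable fun k => Real.exp (-b * ω k)) :
    deriv (Ztr ω) (2*β) = ∑' n : ℕ →₀ ℕ, -(En ω n * Real.exp (-(2*β) * En ω n)) :=
  (hasDerivAt_Ztr ω m β hm hω hβ hsum (2*β) (by simp [Set.mem_Ioi]; linarith)).deriv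

lemma deriv2_Ztr_eq (ω : ℕ → ℝ) (m β : ℝ) (hm : 0 < m) (hω : ∀ k, m ≤ ω k) (hβ : 0 < β)
    (hsum : ∀ b > (0:ℝ), Summable fun k => Real.exp (-b * ω k)) :
    deriv (deriv (Ztr ω)) (2*β)
      = ∑' n : ℕ →₀ ℕ, (En ω n)^2 * Real.exp (-(2*β) * En ω n) := by
  have h2β : (2*β : ℝ) ∈ Set.Ioi β := by simp [Set.mem_Ioi]; linarith
  have heq : deriv (Ztr ω) =ᶠ[nhds (2*β)]
      (fun z => ∑' n : ℕ →₀ ℕ, -(En ω n * Real.exp (-z * En ω n))) := by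
    filter_upwards [isOpen_Ioi.mem_nhds h2β] with y hy
    exact (hasDerivAt_Ztr ω m β hm hω hβ hsum y hy).deriv
  rw [heq.deriv_eq]
  exact (hasDerivAt_Ztr2 ω m β hm hω hβ hsum (2*β) h2β).deriv

noncomputable def gibbsC (β : ℝ) (ω : ℕ → ℝ) (n : ℕ →₀ ℕ) : ℝ :=
  Real.exp (-β * (n.sum fun k v => ω k * (v : ℝ)))

lemma gibbsC_pos (β : ℝ) (ω : ℕ → ℝ) (n : ℕ →₀ ℕ) : 0 < gibbsC β ω n := Real.exp_pos _

lemma fockGibbs_basis (β : ℝ) (ω : ℕ → ℝ) (n mm : ℕ →₀ ℕ) :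
    fockGibbs β ω (fockBasis n) mm = if mm = n then ((gibbsC β ω n : ℝ) : ℂ) else 0 := by
  unfold fockGibbs fockBasis gibbsC
  split_ifs with h
  · subst h; simp
  · simp

-- finsupp helpers
lemma fs_sub_add (n : ℕ →₀ ℕ) (k : ℕ) (h : 1 ≤ n k) :
    n - Finsupp.single k 1 + Finsupp.single k 1 = n := by
  ext i
  by_cases hik : k = i
  · subst hik
    simp only [Finsupp.add_apply, Finsupp.tsub_apply, Finsupp.single_eq_same]
    omega
  · simp [Finsupp.add_apply, Finsupp.tsub_apply, Finsupp.single_eq_of_ne' hik]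

lemma fs_single_inj {k k' : ℕ} (h : (Finsupp.single k 1 : ℕ →₀ ℕ) = Finsupp.single k' 1) :
    k = k' := by
  have := DFunLike.congr_fun h k
  simp only [Finsupp.single_eq_same, Finsupp.single_apply] at this
  split at this
  · omega
  · omega

lemma phi_eq (f : ℕ → ℂ) (β : ℝ) (ω : ℕ → ℝ) (n mm : ℕ →₀ ℕ) (k : ℕ)
    (h : mm + Finsupp.single k 1 = n) :
    fockAnn f (fockGibbs β ω (fockBasis n)) mm
      = (starRingEnd ℂ) (f k) * (Real.sqrt ((mm k : ℝ) + 1) : ℂ) * ((gibbsC β ω n : ℝ) : ℂ) := by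
  unfold fockAnn
  rw [tsum_eq_single k]
  · rw [fockGibbs_basis, if_pos h]
  · intro k' hk'
    rw [fockGibbs_basis, if_neg, mul_zero]
    intro hc
    exact hk' (fs_single_inj (add_left_cancel (hc.trans h.symm)))

lemma phi_zero (f : ℕ → ℂ) (β : ℝ) (ω : ℕ → ℝ) (n mm : ℕ →₀ ℕ)
    (h : ∀ k, mm + Finsupp.single k 1 ≠ n) :
    fockAnn f (fockGibbs β ω (fockBasis n)) mm = 0 := by
  unfold fockAnn
  have : ∀ k : ℕ, (starRingEnd ℂ) (f k) * (Real.sqrt ((mm k : ℝ) + 1) : ℂ) *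
      fockGibbs β ω (fockBasis n) (mm + Finsupp.single k 1) = 0 := by
    intro k
    rw [fockGibbs_basis, if_neg (h k), mul_zero]
  rw [tsum_congr this, tsum_zero]

lemma cre_at_n (f : ℕ → ℂ) (β : ℝ) (ω : ℕ → ℝ) (n : ℕ →₀ ℕ) :
    fockCre f (fockAnn f (fockGibbs β ω (fockBasis n))) n
      = ((gibbsC β ω n : ℝ) : ℂ) * ∑' j : ℕ, ((‖f j‖^2 * (n j : ℝ) : ℝ) : ℂ) := by
  unfold fockCre
  rw [← tsum_mul_left]
  refine tsum_congr fun j => ?_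
  by_cases hj : n j = 0
  · rw [hj]
    simp
  · have hj1 : 1 ≤ n j := Nat.one_le_iff_ne_zero.2 hj
    rw [phi_eq f β ω n _ j (fs_sub_add n j hj1)]
    have harg : (((n - Finsupp.single j 1 : ℕ →₀ ℕ) j : ℕ) : ℝ) + 1 = ((n j : ℕ) : ℝ) := by
      rw [Finsupp.tsub_apply, Finsupp.single_eq_same, Nat.cast_sub hj1]
      simp
    rw [harg]
    have hsq : (Real.sqrt ((n j : ℕ) : ℝ) : ℂ) * (Real.sqrt ((n j : ℕ) : ℝ) : ℂ)
        = (((n j : ℕ) : ℝ) : ℂ) := by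
      rw [← Complex.ofReal_mul, Real.mul_self_sqrt (Nat.cast_nonneg _)]
    have hff : f j * (starRingEnd ℂ) (f j) = ((‖f j‖^2 : ℝ) : ℂ) := by
      rw [Complex.mul_conj]
      norm_cast
      rw [Complex.normSq_eq_norm_sq]
    calc f j * (Real.sqrt ((n j : ℕ) : ℝ) : ℂ) *
          ((starRingEnd ℂ) (f j) * (Real.sqrt ((n j : ℕ) : ℝ) : ℂ) * ((gibbsC β ω n : ℝ) : ℂ))
        = ((gibbsC β ω n : ℝ) : ℂ) * ((f j * (starRingEnd ℂ) (f j)) *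
            ((Real.sqrt ((n j : ℕ) : ℝ) : ℂ) * (Real.sqrt ((n j : ℕ) : ℝ) : ℂ))) := by ring
      _ = ((gibbsC β ω n : ℝ) : ℂ) * ((‖f j‖^2 * (n j : ℝ) : ℝ) : ℂ) := by
          rw [hff, hsq, ← Complex.ofReal_mul]

lemma cre_off (f : ℕ → ℂ) (β : ℝ) (ω : ℕ → ℝ) (n : ℕ →₀ ℕ) (j k : ℕ)
    (hjk : j ≠ k) (hk : 1 ≤ n k) :
    fockCre f (fockAnn f (fockGibbs β ω (fockBasis n)))
        (n - Finsupp.single k 1 + Finsupp.single j 1)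
      = f j * (starRingEnd ℂ) (f k) * (Real.sqrt ((n j : ℝ) + 1) : ℂ) *
          (Real.sqrt ((n k : ℝ)) : ℂ) * ((gibbsC β ω n : ℝ) : ℂ) := by
  set x := n - Finsupp.single k 1 + Finsupp.single j 1 with hx
  have hxj : x j = n j + 1 := by
    rw [hx, Finsupp.add_apply, Finsupp.tsub_apply, Finsupp.single_eq_same,
      Finsupp.single_eq_of_ne' (Ne.symm hjk)]
    omega
  unfold fockCre
  rw [tsum_eq_single j]
  · have hxsub : x - Finsupp.single j 1 = n - Finsupp.single k 1 := by
      rw [hx, add_tsub_cancel_right]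
    rw [hxsub, phi_eq f β ω n _ k (fs_sub_add n k hk)]
    have harg : (((n - Finsupp.single k 1 : ℕ →₀ ℕ) k : ℕ) : ℝ) + 1 = ((n k : ℕ) : ℝ) := by
      rw [Finsupp.tsub_apply, Finsupp.single_eq_same, Nat.cast_sub hk]
      simp
    rw [harg]
    have harg2 : ((x j : ℕ) : ℝ) = (n j : ℝ) + 1 := by rw [hxj]; push_cast; ring
    rw [harg2]
    ring
  · intro j' hj'
    have hphi : fockAnn f (fockGibbs β ω (fockBasis n)) (x - Finsupp.single j' 1) = 0 := by
      refine phi_zero f β ω n _ fun k' hc => ?_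
      have h1 := DFunLike.congr_fun hc j
      simp only [Finsupp.add_apply, Finsupp.tsub_apply] at h1
      rw [hxj, Finsupp.single_eq_of_ne' hj'] at h1
      have h2 : (Finsupp.single k' 1 : ℕ →₀ ℕ) j ≤ 1 := by
        rw [Finsupp.single_apply]
        split <;> omega
      omega
    rw [hphi, mul_zero]

lemma cre_zero (f : ℕ → ℂ) (β : ℝ) (ω : ℕ → ℝ) (n x : ℕ →₀ ℕ) (hx : x ≠ n)
    (hx2 : ∀ j k, j ≠ k → 1 ≤ n k → f j ≠ 0 → f k ≠ 0 →
      x ≠ n - Finsupp.single k 1 + Finsupp.single j 1) :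
    fockCre f (fockAnn f (fockGibbs β ω (fockBasis n))) x = 0 := by
  unfold fockCre
  have hterm : ∀ j : ℕ, f j * (Real.sqrt (x j : ℝ) : ℂ) *
      fockAnn f (fockGibbs β ω (fockBasis n)) (x - Finsupp.single j 1) = 0 := by
    intro j
    by_cases hfj : f j = 0
    · rw [hfj]; simp
    by_cases hxj : x j = 0
    · rw [hxj]; simp
    have hxj1 : 1 ≤ x j := Nat.one_le_iff_ne_zero.2 hxj
    suffices h : fockAnn f (fockGibbs β ω (fockBasis n)) (x - Finsupp.single j 1) = 0 by
      rw [h, mul_zero]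
    by_cases hex : ∃ k', (x - Finsupp.single j 1) + Finsupp.single k' 1 = n
    · obtain ⟨k', hk'⟩ := hex
      by_cases hkj : k' = j
      · subst hkj
        rw [fs_sub_add x k' hxj1] at hk'
        exact absurd hk' hx
      · have hnk' : 1 ≤ n k' := by
          have h1 := DFunLike.congr_fun hk' k'
          simp only [Finsupp.add_apply, Finsupp.single_eq_same] at h1
          omega
        have hxeq : x = n - Finsupp.single k' 1 + Finsupp.single j 1 := by
          have h1 : n - Finsupp.single k' 1 = x - Finsupp.single j 1 := by
            rw [← hk', add_tsub_cancel_right]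
          rw [h1, fs_sub_add x j hxj1]
        have hfk' : f k' = 0 := by
          by_contra hfk
          exact hx2 j k' (fun hh => hkj hh.symm) hnk' hfj hfk hxeq
        rw [phi_eq f β ω n _ k' hk', hfk']
        simp
    · push_neg at hex
      exact phi_zero f β ω n _ hex
  rw [tsum_congr hterm, tsum_zero]

noncomputable def Dre (f : ℕ → ℂ) (n : ℕ →₀ ℕ) : ℝ := ∑' j : ℕ, ‖f j‖^2 * (n j : ℝ)

noncomputable def offT (f : ℕ → ℂ) (n : ℕ →₀ ℕ) : ℕ × ℕ → ℝ := fun p =>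
  if p.1 = p.2 then 0 else (‖f p.1‖^2 * ((n p.1 : ℝ) + 1)) * (‖f p.2‖^2 * (n p.2 : ℝ))

lemma nat_le_sumN (n : ℕ →₀ ℕ) (k : ℕ) : n k ≤ n.sum fun _ v => v := by
  rw [Finsupp.sum]
  by_cases hk : k ∈ n.support
  · exact Finset.single_le_sum (f := fun a => n a) (fun _ _ => Nat.zero_le _) hk
  · simp [Finsupp.notMem_support_iff.1 hk]

lemma summable_b (f : ℕ → ℂ) (hf : Summable fun k => ‖f k‖ ^ 2) (n : ℕ →₀ ℕ) :
    Summable fun k => ‖f k‖^2 * (n k : ℝ) := by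
  refine Summable.of_nonneg_of_le (fun k => by positivity) (fun k => ?_)
    (hf.mul_left ((n.sum fun _ v => v : ℕ) : ℝ))
  rw [mul_comm]
  refine mul_le_mul_of_nonneg_right ?_ (by positivity)
  exact_mod_cast nat_le_sumN n k

lemma summable_a (f : ℕ → ℂ) (hf : Summable fun k => ‖f k‖ ^ 2) (n : ℕ →₀ ℕ) :
    Summable fun k => ‖f k‖^2 * ((n k : ℝ) + 1) := by
  have h := (summable_b f hf n).add hf
  refine h.congr fun k => ?_
  ring

lemma summable_full (f : ℕ → ℂ) (hf : Summable fun k => ‖f k‖ ^ 2) (n : ℕ →₀ ℕ) :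
    Summable fun p : ℕ × ℕ => (‖f p.1‖^2 * ((n p.1 : ℝ) + 1)) * (‖f p.2‖^2 * (n p.2 : ℝ)) :=
  Summable.mul_of_nonneg (summable_a f hf n) (summable_b f hf n)
    (fun k => by positivity) (fun k => by positivity)

lemma summable_offT (f : ℕ → ℂ) (hf : Summable fun k => ‖f k‖ ^ 2) (n : ℕ →₀ ℕ) :
    Summable (offT f n) := by
  refine Summable.of_nonneg_of_le (fun p => ?_) (fun p => ?_) (summable_full f hf n)
  · unfold offT; split <;> positivity
  · unfold offT; split
    · positivity
    · exact le_refl _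

lemma key_eq (f : ℕ → ℂ) (β : ℝ) (ω : ℕ → ℝ) (n : ℕ →₀ ℕ)
    (hf : Summable fun k => ‖f k‖ ^ 2) :
    (∑' x : ℕ →₀ ℕ, ‖fockCre f (fockAnn f (fockGibbs β ω (fockBasis n))) x‖ ^ 2)
      = (gibbsC β ω n)^2 * (Dre f n)^2
        + (gibbsC β ω n)^2 * ∑' p : ℕ × ℕ, offT f n p := by
  classical
  set G := fockCre f (fockAnn f (fockGibbs β ω (fockBasis n))) with hG
  set c := gibbsC β ω n with hc
  have hc0 : 0 < c := gibbsC_pos β ω n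
  have hD0 : 0 ≤ Dre f n := tsum_nonneg fun j => by positivity
  have hDsum : (∑' j : ℕ, ((‖f j‖^2 * (n j : ℝ) : ℝ) : ℂ)) = ((Dre f n : ℝ) : ℂ) := by
    unfold Dre
    rw [Complex.ofReal_tsum]
  have hGn : ‖G n‖^2 = c^2 * (Dre f n)^2 := by
    rw [hG, cre_at_n f β ω n, hDsum]
    rw [norm_mul, Complex.norm_real, Complex.norm_real, Real.norm_eq_abs, Real.norm_eq_abs,
      abs_of_nonneg hc0.le, abs_of_nonneg hD0, mul_pow]
  have hsplit : ∀ x, ‖G x‖^2 = (if x = n then ‖G n‖^2 else 0)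
      + (if x = n then 0 else ‖G x‖^2) := by
    intro x
    split_ifs with h
    · subst h; simp
    · simp
  have hh1 : HasSum (fun x : ℕ →₀ ℕ => if x = n then ‖G n‖^2 else 0) (‖G n‖^2) :=
    hasSum_ite_eq n _
  have hOffS : HasSum (fun p : ℕ × ℕ => c^2 * offT f n p) (c^2 * ∑' p, offT f n p) :=
    (summable_offT f hf n).hasSum.mul_left _
  have hh2 : HasSum (fun x : ℕ →₀ ℕ => if x = n then 0 else ‖G x‖^2)
      (c^2 * ∑' p, offT f n p) := by
    refine (hasSum_iff_hasSum_of_ne_zero_bij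
      (f := fun x : ℕ →₀ ℕ => if x = n then 0 else ‖G x‖^2)
      (fun p => n - Finsupp.single (p : ℕ × ℕ).2 1 + Finsupp.single (p : ℕ × ℕ).1 1)
      ?_ ?_ ?_).2 hOffS
    · -- injective
      rintro ⟨⟨j, k⟩, hp⟩ ⟨⟨j', k'⟩, hp'⟩ h
      simp only [Function.mem_support] at hp hp'
      have hoff : offT f n (j, k) ≠ 0 := fun hz => hp (by simp [hz])
      have hoff' : offT f n (j', k') ≠ 0 := fun hz => hp' (by simp [hz])
      unfold offT at hoff hoff'
      simp only at hoff hoff'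
      have hjk : j ≠ k := by intro hh; exact hoff (if_pos hh)
      have hjk' : j' ≠ k' := by intro hh; exact hoff' (if_pos hh)
      rw [if_neg hjk] at hoff
      rw [if_neg hjk'] at hoff'
      have hnk : 1 ≤ n k := by
        rcases Nat.eq_zero_or_pos (n k) with h0 | h1
        · exfalso; apply hoff; rw [h0]; simp
        · exact h1
      have hnk' : 1 ≤ n k' := by
        rcases Nat.eq_zero_or_pos (n k') with h0 | h1
        · exfalso; apply hoff'; rw [h0]; simp
        · exact h1
      have heq : n - Finsupp.single k 1 + Finsupp.single j 1
          = n - Finsupp.single k' 1 + Finsupp.single j' 1 := by simpa using h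
      have hjj : j = j' := by
        have h1 := DFunLike.congr_fun heq j
        simp only [Finsupp.add_apply, Finsupp.tsub_apply, Finsupp.single_eq_same,
          Finsupp.single_apply, Finsupp.single_eq_of_ne' (Ne.symm hjk)] at h1
        by_contra hne
        rw [if_neg (fun hh : j' = j => hne hh.symm)] at h1
        split at h1 <;> omega
      subst hjj
      have hkk : k = k' := by
        have h1 := DFunLike.congr_fun heq k
        simp only [Finsupp.add_apply, Finsupp.tsub_apply, Finsupp.single_eq_same,
          Finsupp.single_apply, Finsupp.single_eq_of_ne' hjk] at h1
        by_contra hne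
        rw [if_neg (fun hh : k' = k => hne hh.symm)] at h1
        omega
      simp [hkk]
    · -- support subset
      intro x hx
      simp only [Function.mem_support] at hx
      have hxn : x ≠ n := by intro hh; exact hx (if_pos hh)
      rw [if_neg hxn] at hx
      have hGx : G x ≠ 0 := by
        intro hh; exact hx (by rw [hh]; simp)
      have hpair : ¬ (∀ j k, j ≠ k → 1 ≤ n k → f j ≠ 0 → f k ≠ 0 →
          x ≠ n - Finsupp.single k 1 + Finsupp.single j 1) := by
        intro hall
        exact hGx (cre_zero f β ω n x hxn hall)
      push_neg at hpair
      obtain ⟨j, k, hjk, hnk, hfj, hfk, hxeq⟩ := hpair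
      have hmem : (j, k) ∈ Function.support (fun p : ℕ × ℕ => c^2 * offT f n p) := by
        simp only [Function.mem_support]
        unfold offT
        simp only [if_neg hjk]
        have h1 : 0 < ‖f j‖^2 := pow_pos (norm_pos_iff.mpr hfj) 2
        have h2 : 0 < ‖f k‖^2 := pow_pos (norm_pos_iff.mpr hfk) 2
        have h3 : (0:ℝ) < (n k : ℝ) := by exact_mod_cast hnk
        have h4 : (0:ℝ) < (n j : ℝ) + 1 := by positivity
        exact ne_of_gt (mul_pos (pow_pos hc0 2) (mul_pos (mul_pos h1 h4) (mul_pos h2 h3)))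
      exact ⟨⟨(j, k), hmem⟩, hxeq.symm⟩
    · -- values match
      rintro ⟨⟨j, k⟩, hp⟩
      simp only [Function.mem_support] at hp
      have hoff : offT f n (j, k) ≠ 0 := fun hz => hp (by simp [hz])
      unfold offT at hoff
      simp only at hoff
      have hjk : j ≠ k := by intro hh; exact hoff (if_pos hh)
      rw [if_neg hjk] at hoff
      have hnk : 1 ≤ n k := by
        rcases Nat.eq_zero_or_pos (n k) with h0 | h1
        · exfalso; apply hoff; rw [h0]; simp
        · exact h1
      have hne : n - Finsupp.single k 1 + Finsupp.single j 1 ≠ n := by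
        intro hh
        have h1 := DFunLike.congr_fun hh k
        simp only [Finsupp.add_apply, Finsupp.tsub_apply, Finsupp.single_eq_same,
          Finsupp.single_eq_of_ne' hjk] at h1
        omega
      simp only
      rw [if_neg hne, hG, cre_off f β ω n j k hjk hnk]
      rw [norm_mul, norm_mul, norm_mul, norm_mul, RCLike.norm_conj,
        Complex.norm_real, Complex.norm_real, Complex.norm_real,
        Real.norm_eq_abs, Real.norm_eq_abs, Real.norm_eq_abs]
      rw [abs_of_nonneg (Real.sqrt_nonneg _), abs_of_nonneg (Real.sqrt_nonneg _),
        abs_of_nonneg hc0.le]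
      rw [mul_pow, mul_pow, mul_pow, mul_pow,
        Real.sq_sqrt (by positivity : (0:ℝ) ≤ (n j : ℝ) + 1),
        Real.sq_sqrt (by positivity : (0:ℝ) ≤ (n k : ℝ))]
      unfold offT
      simp only [if_neg hjk]
      ring
  calc ∑' x, ‖G x‖^2
      = ∑' x, ((if x = n then ‖G n‖^2 else 0) + (if x = n then 0 else ‖G x‖^2)) :=
        tsum_congr hsplit
    _ = ‖G n‖^2 + c^2 * ∑' p, offT f n p := (hh1.add hh2).tsum_eq
    _ = c^2 * (Dre f n)^2 + c^2 * ∑' p, offT f n p := by rw [hGn]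

lemma alg_le (f : ℕ → ℂ) (n : ℕ →₀ ℕ) (hf : Summable fun k => ‖f k‖ ^ 2) :
    (Dre f n)^2 + (∑' p : ℕ × ℕ, offT f n p)
      ≤ (∑' k : ℕ, ‖f k‖^2)^2 *
          (((n.sum fun _ v => v : ℕ) : ℝ)^2 + ((n.sum fun _ v => v : ℕ) : ℝ)) := by
  classical
  set F := ∑' k : ℕ, ‖f k‖^2 with hF
  set Nr := ((n.sum fun _ v => v : ℕ) : ℝ) with hNr
  set s := n.support with hs
  have hF0 : 0 ≤ F := tsum_nonneg (fun k => by positivity)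
  have hNr0 : 0 ≤ Nr := Nat.cast_nonneg _
  have hbk_le : ∀ k, ‖f k‖^2 ≤ F := fun k => Summable.le_tsum hf k (fun _ _ => by positivity)
  have hν_le : ∀ k, (n k : ℝ) ≤ Nr := fun k => by
    rw [hNr]; exact_mod_cast nat_le_sumN n k
  have hν_sum : ∑ k ∈ s, (n k : ℝ) = Nr := by
    rw [hNr, Finsupp.sum]
    push_cast
    rfl
  have hD_eq : Dre f n = ∑ k ∈ s, ‖f k‖^2 * (n k : ℝ) := by
    unfold Dre
    exact tsum_eq_sum (fun k hk => by
      rw [Finsupp.notMem_support_iff.1 hk]; simp)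
  have hD0 : 0 ≤ Dre f n := by
    rw [hD_eq]; exact Finset.sum_nonneg fun k _ => by positivity
  have hDF : Dre f n ≤ F * Nr := by
    rw [hD_eq]
    calc ∑ k ∈ s, ‖f k‖^2 * (n k : ℝ) ≤ ∑ k ∈ s, F * (n k : ℝ) :=
          Finset.sum_le_sum fun k _ =>
            mul_le_mul_of_nonneg_right (hbk_le k) (Nat.cast_nonneg _)
      _ = F * Nr := by rw [← Finset.mul_sum, hν_sum]
  set QQ := ∑ k ∈ s, ‖f k‖^2 * (n k : ℝ)^2 with hQQ
  have hQQ0 : 0 ≤ QQ := Finset.sum_nonneg fun k _ => by positivity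
  have hcs : (Dre f n)^2 ≤ F * QQ := by
    have e1 : ∀ k : ℕ, Real.sqrt (‖f k‖^2) * (Real.sqrt (‖f k‖^2) * (n k : ℝ))
        = ‖f k‖^2 * (n k : ℝ) := fun k => by
      rw [← mul_assoc, Real.mul_self_sqrt (by positivity)]
    have e2 : ∀ k : ℕ, Real.sqrt (‖f k‖^2)^2 = ‖f k‖^2 :=
      fun k => Real.sq_sqrt (by positivity)
    have h1 := Finset.sum_mul_sq_le_sq_mul_sq s (fun k => Real.sqrt (‖f k‖^2))
      (fun k => Real.sqrt (‖f k‖^2) * (n k : ℝ))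
    rw [hD_eq]
    calc (∑ k ∈ s, ‖f k‖^2 * (n k : ℝ))^2
        = (∑ k ∈ s, Real.sqrt (‖f k‖^2) * (Real.sqrt (‖f k‖^2) * (n k : ℝ)))^2 := by
          rw [Finset.sum_congr rfl (fun k _ => e1 k)]
      _ ≤ (∑ k ∈ s, Real.sqrt (‖f k‖^2)^2) *
            (∑ k ∈ s, (Real.sqrt (‖f k‖^2) * (n k : ℝ))^2) := h1
      _ = (∑ k ∈ s, ‖f k‖^2) * QQ := by
          rw [Finset.sum_congr rfl (fun k _ => e2 k), hQQ]
          congr 1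
          refine Finset.sum_congr rfl fun k _ => ?_
          rw [mul_pow, e2]
      _ ≤ F * QQ := mul_le_mul_of_nonneg_right
            (Summable.sum_le_tsum s (fun k _ => by positivity) hf) hQQ0
  have hν2 : ∑ k ∈ s, (n k : ℝ)^2 ≤ Nr^2 := by
    calc ∑ k ∈ s, (n k : ℝ)^2 ≤ ∑ k ∈ s, (n k : ℝ) * Nr :=
          Finset.sum_le_sum fun k _ => by
            rw [sq]
            exact mul_le_mul_of_nonneg_left (hν_le k) (Nat.cast_nonneg _)
      _ = Nr * Nr := by rw [← Finset.sum_mul, hν_sum]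
      _ = Nr^2 := (sq Nr).symm
  set Sd := ∑ k ∈ s, (‖f k‖^2 * (n k : ℝ))^2 with hSd
  have key2 : 2*F*QQ - Sd ≤ F^2 * Nr^2 := by
    have h1 : ∑ k ∈ s, (2*F*(‖f k‖^2*(n k : ℝ)^2) - (‖f k‖^2*(n k : ℝ))^2)
        ≤ ∑ k ∈ s, F^2 * (n k : ℝ)^2 :=
      Finset.sum_le_sum fun k _ => by
        nlinarith [hbk_le k, sq_nonneg ((n k : ℝ)), sq_nonneg (F - ‖f k‖^2),
          sq_nonneg (‖f k‖ : ℝ), sq_nonneg ((F - ‖f k‖^2) * (n k : ℝ))]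
    calc 2*F*QQ - Sd
        = ∑ k ∈ s, (2*F*(‖f k‖^2*(n k : ℝ)^2) - (‖f k‖^2*(n k : ℝ))^2) := by
          rw [Finset.sum_sub_distrib, hQQ, hSd, Finset.mul_sum]
      _ ≤ ∑ k ∈ s, F^2 * (n k : ℝ)^2 := h1
      _ = F^2 * ∑ k ∈ s, (n k : ℝ)^2 := by rw [Finset.mul_sum]
      _ ≤ F^2 * Nr^2 := mul_le_mul_of_nonneg_left hν2 (by positivity)
  have hb := summable_b f hf n
  have hfull := summable_full f hf n
  set diag : ℕ×ℕ → ℝ := fun p =>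
    if p.1 = p.2 then (‖f p.1‖^2*((n p.1 : ℝ)+1))*(‖f p.2‖^2*(n p.2 : ℝ)) else 0 with hdiagdef
  have hdiag_vanish : ∀ p ∉ s ×ˢ s, diag p = 0 := by
    rintro ⟨j, k⟩ hp
    rw [hdiagdef]
    simp only
    by_cases hjk : j = k
    · subst hjk
      rw [if_pos rfl]
      have hj : j ∉ s := by
        intro hj
        exact hp (Finset.mem_product.2 ⟨hj, hj⟩)
      rw [hs] at hj
      rw [Finsupp.notMem_support_iff.1 hj]
      simp
    · rw [if_neg hjk]
  have hdiag_sum : Summable diag := summable_of_ne_finset_zero hdiag_vanish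
  have hpt : ∀ p : ℕ×ℕ, offT f n p =
      (‖f p.1‖^2*((n p.1 : ℝ)+1))*(‖f p.2‖^2*(n p.2 : ℝ)) - diag p := by
    intro p
    rw [hdiagdef]
    unfold offT
    simp only
    split_ifs with h
    · rw [sub_self]
    · rw [sub_zero]
  have hOff_eq : (∑' p : ℕ×ℕ, offT f n p)
      = (∑' p : ℕ×ℕ, (‖f p.1‖^2*((n p.1 : ℝ)+1))*(‖f p.2‖^2*(n p.2 : ℝ))) - ∑' p, diag p := by
    rw [tsum_congr hpt]
    exact Summable.tsum_sub hfull hdiag_sum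
  have hFull_eq : (∑' p : ℕ×ℕ, (‖f p.1‖^2*((n p.1 : ℝ)+1))*(‖f p.2‖^2*(n p.2 : ℝ)))
      = (Dre f n + F) * Dre f n := by
    have h1 : ∀ b : ℕ, Summable fun c : ℕ => (‖f b‖^2*((n b : ℝ)+1))*(‖f c‖^2*(n c : ℝ)) :=
      fun b => hb.mul_left _
    have hprod := Summable.tsum_prod'
      (f := fun p : ℕ×ℕ => (‖f p.1‖^2*((n p.1 : ℝ)+1))*(‖f p.2‖^2*(n p.2 : ℝ))) hfull h1
    rw [hprod]
    calc ∑' (j : ℕ) (k : ℕ), (‖f j‖^2*((n j : ℝ)+1))*(‖f k‖^2*(n k : ℝ))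
        = ∑' j : ℕ, (‖f j‖^2*((n j : ℝ)+1)) * ∑' k : ℕ, (‖f k‖^2*(n k : ℝ)) :=
          tsum_congr fun j => tsum_mul_left
      _ = (∑' j : ℕ, (‖f j‖^2*((n j : ℝ)+1))) * ∑' k : ℕ, (‖f k‖^2*(n k : ℝ)) :=
          tsum_mul_right
      _ = (Dre f n + F) * Dre f n := by
          congr 1
          have hfun : (fun j : ℕ => ‖f j‖^2*((n j : ℝ)+1))
              = fun j : ℕ => ‖f j‖^2*(n j : ℝ) + ‖f j‖^2 := funext fun j => by ring
          rw [hfun, Summable.tsum_add hb hf]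
          rfl
  have hDiag_ge : Sd ≤ ∑' p, diag p := by
    have htd : (∑' p, diag p) = ∑ p ∈ s ×ˢ s, diag p := tsum_eq_sum hdiag_vanish
    rw [htd, Finset.sum_product, hSd]
    refine Finset.sum_le_sum fun j hj => ?_
    have hinner : ∑ k ∈ s, diag (j, k) = diag (j, j) := by
      rw [Finset.sum_eq_single j]
      · intro k _ hkj
        rw [hdiagdef]
        simp only
        rw [if_neg (fun hh : j = k => hkj hh.symm)]
      · intro hjs
        exact absurd hj hjs
    have hd : diag (j, j) = ‖f j‖ ^ 2 * ((n j : ℝ) + 1) * (‖f j‖ ^ 2 * (n j : ℝ)) := by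
      rw [hdiagdef]
      simp
    rw [hinner, hd]
    nlinarith [sq_nonneg (‖f j‖^2 * (n j : ℝ)), sq_nonneg (‖f j‖ : ℝ),
      Nat.cast_nonneg (α := ℝ) (n j), sq_nonneg (‖f j‖^2)]
  have h5 : (∑' p : ℕ×ℕ, offT f n p) ≤ (Dre f n + F)*(Dre f n) - Sd := by
    rw [hOff_eq, hFull_eq]
    linarith
  have h6 : Dre f n * F ≤ F * Nr * F := by nlinarith
  nlinarith [hcs, key2, h5, h6, hD0, hF0, hNr0]

end HSaux

set_option maxHeartbeats 1000000 in
/-- **Hilbert–Schmidt bound:**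
`‖a†(f)a(f) e^{−βH_B}‖²_HS ≤ ‖f‖⁴ [ (1/m²)(d²/d(2β)²) − (1/m)(d/d(2β)) ] Z(2β)`. -/
theorem hs_bound_cre_ann_gibbs (ω : ℕ → ℝ) (f : ℕ → ℂ) (m β : ℝ) (hm : 0 < m) (hω : ∀ k, m ≤ ω k) (hβ : 0 < β)
    (hf : Summable fun k => ‖f k‖ ^ 2)
    (hsum : ∀ b > (0 : ℝ), Summable fun k => Real.exp (-b * ω k))
    (hp : ∀ p : ℕ, p ≤ 2 → Summable fun k => ω k ^ p * Real.exp (-(2 * β) * ω k))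
    (hZ : Summable fun n : ℕ →₀ ℕ => Real.exp (-(2 * β) * (n.sum fun k v => ω k * (v : ℝ))))
    (hdiff : DifferentiableAt ℝ (Ztr ω) (2 * β))
    (hdiff2 : DifferentiableAt ℝ (deriv (Ztr ω)) (2 * β)) :
    (∑' n : ℕ →₀ ℕ, ∑' x : ℕ →₀ ℕ,
        ‖fockCre f (fockAnn f (fockGibbs β ω (fockBasis n))) x‖ ^ 2) ≤
      (∑' k : ℕ, ‖f k‖ ^ 2) ^ 2 *
        ((1 / m ^ 2) * deriv (deriv (Ztr ω)) (2 * β) -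
          (1 / m) * deriv (Ztr ω) (2 * β)) := by
  classical
  have hβ2 : (0:ℝ) < 2 * β := by linarith
  have hE0 : ∀ n : ℕ →₀ ℕ, 0 ≤ En ω n := En_nonneg ω (fun k => hm.le.trans (hω k))
  have hF0 : (0:ℝ) ≤ ∑' k : ℕ, ‖f k‖ ^ 2 := tsum_nonneg fun k => by positivity
  have hS1 := summable_E1 ω m hm hω hsum hβ2
  have hS2 := summable_E2 ω m hm hω hsum hβ2
  set F : ℝ := ∑' k : ℕ, ‖f k‖ ^ 2 with hFdef
  -- the per-`n` bound
  have hbound : ∀ n : ℕ →₀ ℕ,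
      (gibbsC β ω n)^2 * (Dre f n)^2 + (gibbsC β ω n)^2 * ∑' p : ℕ × ℕ, offT f n p
        ≤ Real.exp (-(2*β) * En ω n) *
            (F^2 * ((En ω n)^2 * (1/m^2) + En ω n * (1/m))) := by
    intro n
    have hc2 : (gibbsC β ω n)^2 = Real.exp (-(2*β) * En ω n) := by
      unfold gibbsC
      rw [sq, ← Real.exp_add]
      congr 1
      show -β * En ω n + -β * En ω n = -(2*β) * En ω n
      ring
    set Nr : ℝ := ((n.sum fun _ v => v : ℕ) : ℝ) with hNrdef
    have hNr0 : 0 ≤ Nr := Nat.cast_nonneg _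
    have hmN : m * Nr ≤ En ω n := by
      unfold En
      rw [hNrdef, Finsupp.sum, Finsupp.sum, Nat.cast_sum, Finset.mul_sum]
      refine Finset.sum_le_sum fun k _ => ?_
      exact mul_le_mul_of_nonneg_right (hω k) (Nat.cast_nonneg _)
    have hNr_le : Nr ≤ En ω n * (1/m) := by
      rw [mul_one_div, le_div_iff₀ hm, mul_comm]
      exact hmN
    have hNr2 : Nr^2 ≤ (En ω n)^2 * (1/m^2) := by
      have h1 : Nr^2 ≤ (En ω n * (1/m))^2 := by
        exact pow_le_pow_left₀ hNr0 hNr_le 2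
      calc Nr^2 ≤ (En ω n * (1/m))^2 := h1
        _ = (En ω n)^2 * (1/m^2) := by
            rw [mul_pow]
            congr 1
            rw [div_pow]
            norm_num
    have halg := alg_le f n hf
    rw [← hFdef, ← hNrdef] at halg
    have hc20 : (0:ℝ) ≤ (gibbsC β ω n)^2 := sq_nonneg _
    calc (gibbsC β ω n)^2 * (Dre f n)^2 + (gibbsC β ω n)^2 * ∑' p : ℕ × ℕ, offT f n p
        = (gibbsC β ω n)^2 * ((Dre f n)^2 + ∑' p : ℕ × ℕ, offT f n p) := by ring
      _ ≤ (gibbsC β ω n)^2 * (F^2 * (Nr^2 + Nr)) :=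
          mul_le_mul_of_nonneg_left halg hc20
      _ ≤ (gibbsC β ω n)^2 * (F^2 * ((En ω n)^2 * (1/m^2) + En ω n * (1/m))) := by
          refine mul_le_mul_of_nonneg_left ?_ hc20
          refine mul_le_mul_of_nonneg_left ?_ (by positivity)
          exact add_le_add hNr2 hNr_le
      _ = Real.exp (-(2*β) * En ω n) *
            (F^2 * ((En ω n)^2 * (1/m^2) + En ω n * (1/m))) := by rw [hc2]
  -- summability of the dominating sequence
  have hRHSsum : Summable (fun n : ℕ →₀ ℕ => Real.exp (-(2*β) * En ω n) *
      (F^2 * ((En ω n)^2 * (1/m^2) + En ω n * (1/m)))) := by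
    refine (((hS2.mul_left (F^2 * (1/m^2))).add (hS1.mul_left (F^2 * (1/m)))).congr
      fun n => ?_)
    ring
  have hLHS_nonneg : ∀ n : ℕ →₀ ℕ,
      0 ≤ (gibbsC β ω n)^2 * (Dre f n)^2 + (gibbsC β ω n)^2 * ∑' p : ℕ × ℕ, offT f n p := by
    intro n
    have hOff0 : (0:ℝ) ≤ ∑' p : ℕ × ℕ, offT f n p := by
      refine tsum_nonneg fun p => ?_
      unfold offT
      split
      · exact le_refl _
      · positivity
    positivity
  have hLHSsum : Summable (fun n : ℕ →₀ ℕ =>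
      (gibbsC β ω n)^2 * (Dre f n)^2 + (gibbsC β ω n)^2 * ∑' p : ℕ × ℕ, offT f n p) :=
    Summable.of_nonneg_of_le hLHS_nonneg hbound hRHSsum
  -- the derivative identities
  have hd1 : deriv (Ztr ω) (2*β) = -∑' n : ℕ →₀ ℕ, En ω n * Real.exp (-(2*β) * En ω n) := by
    rw [deriv_Ztr_eq ω m β hm hω hβ hsum, tsum_neg]
  have hd2 : deriv (deriv (Ztr ω)) (2*β)
      = ∑' n : ℕ →₀ ℕ, (En ω n)^2 * Real.exp (-(2*β) * En ω n) :=
    deriv2_Ztr_eq ω m β hm hω hβ hsum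
  calc (∑' n : ℕ →₀ ℕ, ∑' x : ℕ →₀ ℕ,
        ‖fockCre f (fockAnn f (fockGibbs β ω (fockBasis n))) x‖ ^ 2)
      = ∑' n : ℕ →₀ ℕ, ((gibbsC β ω n)^2 * (Dre f n)^2
          + (gibbsC β ω n)^2 * ∑' p : ℕ × ℕ, offT f n p) :=
        tsum_congr fun n => key_eq f β ω n hf
    _ ≤ ∑' n : ℕ →₀ ℕ, Real.exp (-(2*β) * En ω n) *
          (F^2 * ((En ω n)^2 * (1/m^2) + En ω n * (1/m))) :=
        Summable.tsum_le_tsum hbound hLHSsum hRHSsum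
    _ = ∑' n : ℕ →₀ ℕ, ((F^2 * (1/m^2)) * ((En ω n)^2 * Real.exp (-(2*β) * En ω n))
          + (F^2 * (1/m)) * (En ω n * Real.exp (-(2*β) * En ω n))) :=
        tsum_congr fun n => by ring
    _ = (F^2 * (1/m^2)) * (∑' n : ℕ →₀ ℕ, (En ω n)^2 * Real.exp (-(2*β) * En ω n))
          + (F^2 * (1/m)) * (∑' n : ℕ →₀ ℕ, En ω n * Real.exp (-(2*β) * En ω n)) := by
        rw [Summable.tsum_add (hS2.mul_left _) (hS1.mul_left _), tsum_mul_left, tsum_mul_left]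
    _ = F ^ 2 * ((1 / m ^ 2) * deriv (deriv (Ztr ω)) (2 * β)
          - (1 / m) * deriv (Ztr ω) (2 * β)) := by
        rw [hd1, hd2]
        ring
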